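/- arXiv:2501.09516 — 5 statements merged into one kernel-verified Lean document; each statement's English description precedes it below -/
import Mathlib

section
/- Let X ∈ St(n,r), let f : ℝ^{n×r} → ℝ be differentiable at X, let h : ℝ^{n×r} → ℝ be convex, and let B : ℝ^{n×r} → ℝ^{n×r} be a linear map that is self-adjoint for the trace inner product, maps T_X into itself, and is positive definite on T_X. If V* minimizes φ(V) := ⟨∇f(X),V⟩ + (1/2)⟨V,BV⟩ + h(X+V) over the subspace T_X, then φ(0) − φ(V*) ≥ (1/2)⟨V*, B V*⟩. -/
set_option maxHeartbeats 1000000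


open Matrix

/-- The trace inner product `⟨A, B⟩ = tr(AᵀB)` on `ℝ^{n×r}`. -/
noncomputable def tinner {n r : ℕ} (A B : Matrix (Fin n) (Fin r) ℝ) : ℝ := (Aᵀ * B).trace

/-- `V` belongs to the tangent space `T_X = {V : VᵀX + XᵀV = 0}` of the Stiefel manifold at `X`. -/
def IsTangent {n r : ℕ} (X V : Matrix (Fin n) (Fin r) ℝ) : Prop := Vᵀ * X + Xᵀ * V = 0

attribute [local instance] Matrix.frobeniusNormedAddCommGroup Matrix.frobeniusNormedSpace

lemma tinner_smul_left {n r : ℕ} (c : ℝ) (A B : Matrix (Fin n) (Fin r) ℝ) :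
    tinner (c • A) B = c * tinner A B := by
  simp [tinner, Matrix.transpose_smul, Matrix.smul_mul, Matrix.trace_smul]

lemma tinner_smul_right {n r : ℕ} (c : ℝ) (A B : Matrix (Fin n) (Fin r) ℝ) :
    tinner A (c • B) = c * tinner A B := by
  simp [tinner, Matrix.mul_smul, Matrix.trace_smul]

lemma isTangent_smul {n r : ℕ} (c : ℝ) {X V : Matrix (Fin n) (Fin r) ℝ}
    (hV : IsTangent X V) : IsTangent X (c • V) := by
  unfold IsTangent at *
  rw [Matrix.transpose_smul, Matrix.smul_mul, Matrix.mul_smul, ← smul_add, hV, smul_zero]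

theorem stmt0 {n r : ℕ} (X : Matrix (Fin n) (Fin r) ℝ) (hX : Xᵀ * X = 1)
    (f h : Matrix (Fin n) (Fin r) ℝ → ℝ)
    -- `f` is differentiable at `X` with (Euclidean) gradient `G = ∇f(X)`
    (G : Matrix (Fin n) (Fin r) ℝ) (Lf : Matrix (Fin n) (Fin r) ℝ →L[ℝ] ℝ)
    (hf : HasFDerivAt f Lf X) (hGrad : ∀ V, Lf V = tinner G V)
    -- `h` is convex
    (hconv : ConvexOn ℝ Set.univ h)
    -- `B` is linear, self-adjoint for the trace inner product, maps `T_X` into itself,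
    -- and is positive definite on `T_X`
    (B : Matrix (Fin n) (Fin r) ℝ →ₗ[ℝ] Matrix (Fin n) (Fin r) ℝ)
    (hBsa : ∀ U V, tinner U (B V) = tinner (B U) V)
    (hBtan : ∀ V, IsTangent X V → IsTangent X (B V))
    (hBpos : ∀ V, IsTangent X V → V ≠ 0 → 0 < tinner V (B V))
    -- the objective `φ(V) = ⟨∇f(X),V⟩ + (1/2)⟨V,BV⟩ + h(X+V)`
    (φ : Matrix (Fin n) (Fin r) ℝ → ℝ)
    (hφ : ∀ V, φ V = tinner G V + (1 / 2) * tinner V (B V) + h (X + V))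
    -- `V*` minimizes `φ` over `T_X`
    (Vs : Matrix (Fin n) (Fin r) ℝ) (hVs : IsTangent X Vs)
    (hmin : ∀ V, IsTangent X V → φ Vs ≤ φ V) :
    (1 / 2) * tinner Vs (B Vs) ≤ φ 0 - φ Vs := by
  set q : ℝ := tinner Vs (B Vs) with hq
  set a : ℝ := tinner G Vs + h (X + Vs) with ha
  -- key inequality: for all t ∈ (0,1], a + q ≤ h X + (t/2) * q
  have key : ∀ t : ℝ, 0 < t → t ≤ 1 → a + q ≤ h X + (t / 2) * q := by
    intro t ht ht1
    have htan : IsTangent X ((1 - t) • Vs) := isTangent_smul _ hVs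
    have hm := hmin _ htan
    rw [hφ, hφ] at hm
    have e1 : tinner G ((1 - t) • Vs) = (1 - t) * tinner G Vs :=
      tinner_smul_right _ _ _
    have e2 : tinner ((1 - t) • Vs) (B ((1 - t) • Vs)) = (1 - t) * ((1 - t) * q) := by
      rw [_root_.map_smul, tinner_smul_right, tinner_smul_left]
    have e3 : h (X + (1 - t) • Vs) ≤ (1 - t) * h (X + Vs) + t * h X := by
      have hc := hconv.2 (Set.mem_univ (X + Vs)) (Set.mem_univ X)
        (by linarith : (0:ℝ) ≤ 1 - t) (le_of_lt ht) (by ring)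
      have e : (1 - t) • (X + Vs) + t • X = X + (1 - t) • Vs := by
        rw [smul_add]
        rw [show (1 - t) • X + (1 - t) • Vs + t • X = ((1 - t) + t) • X + (1 - t) • Vs by
          rw [add_smul]; abel]
        simp
      rw [e] at hc
      simpa [smul_eq_mul] using hc
    rw [e1, e2] at hm
    nlinarith [hm, e3]
  -- φ 0 = h X, φ Vs = a + q/2
  have hφ0 : φ 0 = h X := by
    rw [hφ]; simp [tinner, ha]
  have hφVs : φ Vs = a + (1 / 2) * q := by rw [hφ, ha, hq]; ring
  rw [hφ0, hφVs]
  -- goal: (1/2) q ≤ h X - (a + (1/2) q), i.e. a + q ≤ h X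
  have main : a + q ≤ h X := by
    rcases le_or_gt q 0 with hq0 | hq0
    · have := key 1 one_pos le_rfl
      linarith
    · -- ε-argument
      have : ∀ ε > (0:ℝ), a + q ≤ h X + ε := by
        intro ε hε
        have ht : 0 < min 1 (2 * ε / q) := by positivity
        have h1 := key _ ht (min_le_left _ _)
        have h2 : (min 1 (2 * ε / q)) / 2 * q ≤ ε := by
          have : min 1 (2 * ε / q) ≤ 2 * ε / q := min_le_right _ _
          calc (min 1 (2 * ε / q)) / 2 * q ≤ (2 * ε / q) / 2 * q := by
                apply mul_le_mul_of_nonneg_right _ hq0.le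
                linarith
            _ = ε := by field_simp
        linarith
      exact le_of_forall_pos_le_add this
  linarith
end

section
/- Let f : ℝ^{n×r} → ℝ be differentiable with L-Lipschitz gradient, let h : ℝ^{n×r} → ℝ be L_h-Lipschitz, and let ϱ, M₁, M₂ > 0. Let X, Y, ξ ∈ ℝ^{n×r} satisfy ‖∇f(X)‖ ≤ ϱ, ‖Y − X‖ ≤ M₁‖ξ‖, and ‖Y − X − ξ‖ ≤ M₂‖ξ‖². Then f(Y) + h(Y) ≤ f(X) + ⟨∇f(X), ξ⟩ + (ϱM₂ + (1/2)LM₁² + L_hM₂)‖ξ‖² + h(X + ξ). -/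
open Matrix

attribute [local instance] Matrix.frobeniusNormedAddCommGroup Matrix.frobeniusNormedSpace

lemma tinner_eq_sum {n r : ℕ} (A B : Matrix (Fin n) (Fin r) ℝ) :
    tinner A B = ∑ p : Fin n × Fin r, A p.1 p.2 * B p.1 p.2 := by
  rw [tinner, Matrix.trace]
  rw [Fintype.sum_prod_type, Finset.sum_comm]
  simp [Matrix.diag, Matrix.mul_apply, Matrix.transpose_apply]

lemma norm_sq_eq {n r : ℕ} (A : Matrix (Fin n) (Fin r) ℝ) :
    ‖A‖ ^ 2 = ∑ p : Fin n × Fin r, (A p.1 p.2) ^ 2 := by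
  rw [Matrix.frobenius_norm_def]
  rw [← Real.rpow_natCast _ 2, ← Real.rpow_mul (by positivity)]
  norm_num
  rw [Fintype.sum_prod_type]


lemma tinner_le {n r : ℕ} (A B : Matrix (Fin n) (Fin r) ℝ) :
    tinner A B ≤ ‖A‖ * ‖B‖ := by
  have h := Finset.sum_mul_sq_le_sq_mul_sq Finset.univ (fun p : Fin n × Fin r => A p.1 p.2)
    (fun p => B p.1 p.2)
  rw [← tinner_eq_sum, ← norm_sq_eq, ← norm_sq_eq] at h
  nlinarith [norm_nonneg A, norm_nonneg B, mul_nonneg (norm_nonneg A) (norm_nonneg B)]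

lemma tinner_add_right {n r : ℕ} (A B C : Matrix (Fin n) (Fin r) ℝ) :
    tinner A (B + C) = tinner A B + tinner A C := by
  simp [tinner, Matrix.mul_add]

lemma tinner_sub_left {n r : ℕ} (A B C : Matrix (Fin n) (Fin r) ℝ) :
    tinner (A - B) C = tinner A C - tinner B C := by
  simp [tinner, Matrix.sub_mul, Matrix.transpose_sub]

lemma descent {n r : ℕ} (f : Matrix (Fin n) (Fin r) ℝ → ℝ)
    (g : Matrix (Fin n) (Fin r) ℝ → Matrix (Fin n) (Fin r) ℝ)
    (Lf : Matrix (Fin n) (Fin r) ℝ → (Matrix (Fin n) (Fin r) ℝ →L[ℝ] ℝ))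
    (hf : ∀ Z, HasFDerivAt f (Lf Z) Z) (hGrad : ∀ Z V, Lf Z V = tinner (g Z) V)
    (L : ℝ) (hLipg : ∀ A B, ‖g A - g B‖ ≤ L * ‖A - B‖) (hL : 0 ≤ L)
    (X Y : Matrix (Fin n) (Fin r) ℝ) :
    f Y ≤ f X + tinner (g X) (Y - X) + L / 2 * ‖Y - X‖ ^ 2 := by
  set D := Y - X with hD
  set c₁ : ℝ := tinner (g X) D with hc₁
  set c₂ : ℝ := L / 2 * ‖D‖ ^ 2 with hc₂
  set ψ : ℝ → ℝ := fun t => f (X + t • D) - t * c₁ - c₂ * t ^ 2 with hψdef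
  have hu : ∀ t : ℝ, HasDerivAt (fun s : ℝ => X + s • D) D t := by
    intro t
    have := ((hasDerivAt_id t).smul_const D).const_add X
    simp only [id, one_smul] at this
    exact this
  have hψ : ∀ t : ℝ, HasDerivAt ψ (tinner (g (X + t • D)) D - c₁ - c₂ * (2 * t)) t := by
    intro t
    have h1 : HasDerivAt (fun s : ℝ => f (X + s • D)) (tinner (g (X + t • D)) D) t := by
      have := (hf (X + t • D)).comp_hasDerivAt t (hu t)
      rw [← hGrad (X + t • D) D]; exact this
    have h2 : HasDerivAt (fun s : ℝ => s * c₁) c₁ t := hasDerivAt_mul_const c₁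
    have h3 : HasDerivAt (fun s : ℝ => c₂ * s ^ 2) (c₂ * (2 * t)) t := by
      simpa using ((hasDerivAt_pow 2 t).const_mul c₂)
    exact (h1.sub h2).sub h3
  have hmono : AntitoneOn ψ (Set.Icc (0:ℝ) 1) := by
    apply antitoneOn_of_deriv_nonpos (convex_Icc 0 1)
    · exact Continuous.continuousOn (by
        have : Differentiable ℝ ψ := fun t => (hψ t).differentiableAt
        exact this.continuous)
    · intro t _
      exact (hψ t).differentiableAt.differentiableWithinAt
    · intro t ht
      rw [interior_Icc] at ht
      rw [(hψ t).deriv]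
      have key : tinner (g (X + t • D)) D - c₁ ≤ L * t * ‖D‖ ^ 2 := by
        have e1 : tinner (g (X + t • D)) D - c₁ = tinner (g (X + t • D) - g X) D := by
          rw [hc₁, tinner_sub_left]
        rw [e1]
        calc tinner (g (X + t • D) - g X) D ≤ ‖g (X + t • D) - g X‖ * ‖D‖ := tinner_le _ _
          _ ≤ (L * ‖(X + t • D) - X‖) * ‖D‖ := by
              exact mul_le_mul_of_nonneg_right (hLipg _ _) (norm_nonneg _)
          _ = L * t * ‖D‖ ^ 2 := by
              have : ‖(X + t • D) - X‖ = t * ‖D‖ := by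
                simp [norm_smul, abs_of_pos ht.1]
              rw [this]; ring
      have : c₂ * (2 * t) = L * t * ‖D‖ ^ 2 := by rw [hc₂]; ring
      linarith
  have h01 := hmono (Set.left_mem_Icc.2 zero_le_one) (Set.right_mem_Icc.2 zero_le_one) zero_le_one
  have e0 : ψ 0 = f X := by simp [hψdef]
  have e1 : ψ 1 = f Y - c₁ - c₂ := by
    have : X + D = Y := by rw [hD]; abel
    simp [hψdef, this]
  have : f Y - c₁ - c₂ ≤ f X := by rw [← e0, ← e1]; exact h01
  rw [hc₁, hc₂] at this
  linarith

theorem stmt3 {n r : ℕ} (f h : Matrix (Fin n) (Fin r) ℝ → ℝ)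
    -- `f` is differentiable with gradient function `g = ∇f`
    (g : Matrix (Fin n) (Fin r) ℝ → Matrix (Fin n) (Fin r) ℝ)
    (Lf : Matrix (Fin n) (Fin r) ℝ → (Matrix (Fin n) (Fin r) ℝ →L[ℝ] ℝ))
    (hf : ∀ Z, HasFDerivAt f (Lf Z) Z) (hGrad : ∀ Z V, Lf Z V = tinner (g Z) V)
    (L Lh ϱ M₁ M₂ : ℝ)
    -- `∇f` is `L`-Lipschitz
    (hLipg : ∀ A B, ‖g A - g B‖ ≤ L * ‖A - B‖)
    -- `h` is `L_h`-Lipschitz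
    (hLiph : ∀ A B, |h A - h B| ≤ Lh * ‖A - B‖)
    (hϱ : 0 < ϱ) (hM₁ : 0 < M₁) (hM₂ : 0 < M₂)
    (X Y ξ : Matrix (Fin n) (Fin r) ℝ)
    (hgX : ‖g X‖ ≤ ϱ)
    (h1 : ‖Y - X‖ ≤ M₁ * ‖ξ‖) (h2 : ‖Y - X - ξ‖ ≤ M₂ * ‖ξ‖ ^ 2) :
    f Y + h Y ≤
      f X + tinner (g X) ξ + (ϱ * M₂ + (1 / 2) * L * M₁ ^ 2 + Lh * M₂) * ‖ξ‖ ^ 2 + h (X + ξ) := by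
  by_cases hsub : Subsingleton (Matrix (Fin n) (Fin r) ℝ)
  · have hYX : Y = X := Subsingleton.elim Y X
    have hξ0 : ξ = 0 := Subsingleton.elim ξ 0
    have ht0 : tinner (g X) ξ = 0 := by simp [hξ0, tinner]
    have ht0' : tinner (g X) 0 = 0 := by simp [tinner]
    simp [hYX, hξ0, ht0, ht0']
  · have : Nontrivial (Matrix (Fin n) (Fin r) ℝ) := not_subsingleton_iff_nontrivial.mp hsub
    obtain ⟨A, B, hAB⟩ := exists_pair_ne (Matrix (Fin n) (Fin r) ℝ)
    have hABpos : 0 < ‖A - B‖ := by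
      rw [norm_pos_iff]; exact sub_ne_zero_of_ne hAB
    have hL : 0 ≤ L := by
      have h0 := (norm_nonneg (g A - g B)).trans (hLipg A B)
      exact nonneg_of_mul_nonneg_right (by linarith [h0] : 0 ≤ ‖A - B‖ * L) hABpos
    have hLh : 0 ≤ Lh := by
      have h0 := (abs_nonneg (h A - h B)).trans (hLiph A B)
      exact nonneg_of_mul_nonneg_right (by linarith [h0] : 0 ≤ ‖A - B‖ * Lh) hABpos
    -- descent lemma
    have hdes := descent f g Lf hf hGrad L hLipg hL X Y
    -- split the inner product
    have hsplit : tinner (g X) (Y - X) = tinner (g X) ξ + tinner (g X) (Y - X - ξ) := by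
      rw [← tinner_add_right]; congr 1; abel
    have hcs : tinner (g X) (Y - X - ξ) ≤ ϱ * (M₂ * ‖ξ‖ ^ 2) := by
      calc tinner (g X) (Y - X - ξ) ≤ ‖g X‖ * ‖Y - X - ξ‖ := tinner_le _ _
        _ ≤ ϱ * (M₂ * ‖ξ‖ ^ 2) :=
          mul_le_mul hgX h2 (norm_nonneg _) hϱ.le
    have hquad : L / 2 * ‖Y - X‖ ^ 2 ≤ 1 / 2 * L * M₁ ^ 2 * ‖ξ‖ ^ 2 := by
      have hsq : ‖Y - X‖ ^ 2 ≤ (M₁ * ‖ξ‖) ^ 2 :=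
        pow_le_pow_left₀ (norm_nonneg _) h1 2
      nlinarith
    have hh : h Y ≤ h (X + ξ) + Lh * (M₂ * ‖ξ‖ ^ 2) := by
      have := (le_abs_self (h Y - h (X + ξ))).trans (hLiph Y (X + ξ))
      have he : Y - (X + ξ) = Y - X - ξ := by abel
      rw [he] at this
      have h2' : Lh * ‖Y - X - ξ‖ ≤ Lh * (M₂ * ‖ξ‖ ^ 2) :=
        mul_le_mul_of_nonneg_left h2 hLh
      linarith
    linarith
end

section
/- Let δ > 0 and let s, y ∈ ℝ^{n×r} with s ≠ 0. Define β := 1 if tr(sᵀy) ≥ 0.25 δ‖s‖², and β := 0.75 δ‖s‖² / (δ‖s‖² − tr(sᵀy)) otherwise, and set ȳ := βy + (1−β)δs. Then β ∈ (0,1], tr(sᵀȳ) = max{0.25 δ‖s‖², tr(sᵀy)} (in particular tr(sᵀȳ) ≥ 0.25 δ‖s‖² > 0), and ‖ȳ‖ ≤ β‖y‖ + (1−β)δ‖s‖ ≤ ‖y‖ + δ‖s‖. -/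
open Matrix

-- The norm `‖·‖` below is the Frobenius norm, associated to the trace inner product.
attribute [local instance] Matrix.frobeniusNormedAddCommGroup Matrix.frobeniusNormedSpace

lemma tinner_self {n r : ℕ} (s : Matrix (Fin n) (Fin r) ℝ) : tinner s s = ‖s‖ ^ 2 := by
  have h : ‖s‖ ^ 2 = ∑ i, ∑ j, ‖s i j‖ ^ (2:ℝ) := by
    rw [Matrix.frobenius_norm_def, ← Real.rpow_natCast _ 2, ← Real.rpow_mul
      (by positivity)]
    norm_num
  rw [h]
  simp [tinner, Matrix.trace, Matrix.diag, Matrix.mul_apply, Real.norm_eq_abs, Real.rpow_two,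
    sq_abs, sq]
  rw [Finset.sum_comm]

lemma tinner_smul_add {n r : ℕ} (s y z : Matrix (Fin n) (Fin r) ℝ) (a b : ℝ) :
    tinner s (a • y + b • z) = a * tinner s y + b * tinner s z := by
  simp [tinner, Matrix.mul_add, Matrix.mul_smul, Matrix.trace_add, Matrix.trace_smul, smul_eq_mul]

theorem stmt6 {n r : ℕ} (δ : ℝ) (hδ : 0 < δ)
    (s y : Matrix (Fin n) (Fin r) ℝ) (hs : s ≠ 0)
    -- the damping coefficient β
    (β : ℝ)
    (hβ : β = if 0.25 * δ * ‖s‖ ^ 2 ≤ tinner s y then 1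
              else 0.75 * δ * ‖s‖ ^ 2 / (δ * ‖s‖ ^ 2 - tinner s y))
    -- the damped vector `ȳ := βy + (1-β)·δs`  (here `H₀⁻¹s = δs`)
    (ybar : Matrix (Fin n) (Fin r) ℝ) (hybar : ybar = β • y + (1 - β) • δ • s) :
    (0 < β ∧ β ≤ 1) ∧
      (tinner s ybar = max (0.25 * δ * ‖s‖ ^ 2) (tinner s y) ∧
        0.25 * δ * ‖s‖ ^ 2 ≤ tinner s ybar ∧ 0 < 0.25 * δ * ‖s‖ ^ 2) ∧
      (‖ybar‖ ≤ β * ‖y‖ + (1 - β) * (δ * ‖s‖) ∧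
        β * ‖y‖ + (1 - β) * (δ * ‖s‖) ≤ ‖y‖ + δ * ‖s‖) := by
  have hsn : 0 < ‖s‖ := norm_pos_iff.mpr hs
  have hs2 : 0 < ‖s‖ ^ 2 := by positivity
  have hq : 0 < 0.25 * δ * ‖s‖ ^ 2 := by positivity
  have htin : tinner s ybar = β * tinner s y + (1 - β) * (δ * ‖s‖ ^ 2) := by
    rw [hybar, tinner_smul_add]
    have : tinner s (δ • s) = δ * ‖s‖ ^ 2 := by
      have := tinner_smul_add s s s δ 0
      simp at this
      simp [this, tinner_self]
    rw [this]
  have hβ01 : 0 < β ∧ β ≤ 1 := by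
    rw [hβ]; split_ifs with h
    · norm_num
    · push_neg at h
      have hD : 0 < δ * ‖s‖ ^ 2 - tinner s y := by nlinarith
      constructor
      · positivity
      · rw [div_le_one hD]; nlinarith
  obtain ⟨hβ0, hβ1⟩ := hβ01
  have hmax : tinner s ybar = max (0.25 * δ * ‖s‖ ^ 2) (tinner s y) := by
    rw [htin, hβ]
    split_ifs with h
    · simp [max_eq_right h]
    · push_neg at h
      have hD : 0 < δ * ‖s‖ ^ 2 - tinner s y := by nlinarith
      rw [max_eq_left h.le]
      field_simp
      ring
  refine ⟨⟨hβ0, hβ1⟩, ⟨hmax, ?_, hq⟩, ?_, ?_⟩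
  · rw [hmax]; exact le_max_left _ _
  · rw [hybar]
    calc ‖β • y + (1 - β) • δ • s‖ ≤ ‖β • y‖ + ‖(1 - β) • δ • s‖ := norm_add_le _ _
      _ = β * ‖y‖ + (1 - β) * (δ * ‖s‖) := by
          rw [norm_smul, norm_smul, norm_smul]
          simp [abs_of_pos hβ0, abs_of_nonneg (by linarith : (0:ℝ) ≤ 1 - β), abs_of_pos hδ,
            mul_assoc]
  · nlinarith [norm_nonneg y, norm_nonneg s, mul_nonneg (norm_nonneg y) (sub_nonneg.mpr hβ1)]
end

section
/- Let δ, C > 0, let B ∈ ℝ^{n×n} be symmetric positive semidefinite, and let s, ȳ ∈ ℝ^{n×r} satisfy tr(sᵀBs) > 0, tr(sᵀȳ) ≥ 0.25 δ‖s‖² > 0, and ‖ȳ‖ ≤ C‖s‖. Then the BFGS-updated matrix B⁺ := B − (Bs)(Bs)ᵀ/tr(sᵀBs) + ȳȳᵀ/tr(sᵀȳ) satisfies ‖B⁺‖₂ ≤ ‖B‖₂ + 4C²/δ, where ‖·‖₂ denotes the spectral (operator 2-) norm. -/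
open Matrix
open scoped Matrix.Norms.L2Operator
open scoped MatrixOrder
-- With the scoped `Matrix.L2OpNorm` instances, `‖·‖` on matrices below is the
-- spectral (operator 2-) norm `‖·‖₂`.

/-- The Frobenius norm `‖A‖ = √(tr(AᵀA))` on `ℝ^{n×r}`, associated to the trace inner product. -/
noncomputable def fnorm {n r : ℕ} (A : Matrix (Fin n) (Fin r) ℝ) : ℝ :=
  Real.sqrt (Aᵀ * A).trace

-- trace of MᵀM as sum of squares
lemma trace_tmul {n r : ℕ} (M : Matrix (Fin n) (Fin r) ℝ) :
    (Mᵀ * M).trace = ∑ i, ∑ j, M j i ^ 2 := by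
  simp [Matrix.trace, Matrix.mul_apply, Matrix.diag, sq]

lemma trace_tmul_nonneg {n r : ℕ} (M : Matrix (Fin n) (Fin r) ℝ) :
    0 ≤ (Mᵀ * M).trace := by
  rw [trace_tmul]
  positivity

-- Cauchy-Schwarz sum lemma
lemma cs_sum {n r : ℕ} (M : Matrix (Fin n) (Fin r) ℝ) (v : Fin n → ℝ) :
    v ⬝ᵥ (M * Mᵀ) *ᵥ v ≤ (Mᵀ * M).trace * (v ⬝ᵥ v) := by
  have h1 : v ⬝ᵥ (M * Mᵀ) *ᵥ v = (Mᵀ *ᵥ v) ⬝ᵥ (Mᵀ *ᵥ v) := by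
    rw [← Matrix.mulVec_mulVec, Matrix.dotProduct_mulVec, ← Matrix.mulVec_transpose]
  rw [h1, trace_tmul, Finset.sum_mul]
  unfold dotProduct Matrix.mulVec
  refine Finset.sum_le_sum fun i _ => ?_
  simp only [dotProduct, Matrix.transpose_apply]
  calc (∑ j, M j i * v j) * (∑ j, M j i * v j)
      = (∑ j, M j i * v j) ^ 2 := (sq _).symm
    _ ≤ (∑ j, M j i ^ 2) * (∑ j, v j ^ 2) :=
        Finset.sum_mul_sq_le_sq_mul_sq _ _ _
    _ = (∑ j, M j i ^ 2) * (∑ j, v j * v j) := by simp [sq]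

lemma euclid_norm_sq {n : ℕ} (y : EuclideanSpace ℝ (Fin n)) :
    ‖y‖ ^ 2 = (WithLp.equiv 2 (Fin n → ℝ) y) ⬝ᵥ (WithLp.equiv 2 (Fin n → ℝ) y) := by
  rw [EuclideanSpace.norm_eq, Real.sq_sqrt (by positivity)]
  simp [dotProduct, sq]

lemma psd_opnorm_le {n : ℕ} {A : Matrix (Fin n) (Fin n) ℝ} (hA : A.PosSemidef) {c : ℝ}
    (hc : 0 ≤ c) (h : ∀ x : Fin n → ℝ, x ⬝ᵥ A *ᵥ x ≤ c * (x ⬝ᵥ x)) : ‖A‖ ≤ c := by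
  set L := CFC.sqrt A with hL
  have hLps := (CFC.sqrt_nonneg A).posSemidef
  have hAL : Lᴴ * L = A := by rw [hLps.1]; exact CFC.sqrt_mul_sqrt_self A hA.nonneg
  have hnorm : ‖A‖ = ‖L‖ * ‖L‖ := by rw [← hAL]; exact Matrix.l2_opNorm_conjTranspose_mul_self L
  have hLnorm : ‖L‖ ≤ Real.sqrt c := by
    rw [Matrix.l2_opNorm_def]
    apply ContinuousLinearMap.opNorm_le_bound _ (Real.sqrt_nonneg c)
    intro x
    have key : ‖(Matrix.toEuclideanLin.trans LinearMap.toContinuousLinearMap) L x‖ ^ 2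
        ≤ c * ‖x‖ ^ 2 := by
      rw [euclid_norm_sq, euclid_norm_sq]
      have : (WithLp.equiv 2 (Fin n → ℝ))
          ((Matrix.toEuclideanLin.trans LinearMap.toContinuousLinearMap) L x)
          = L *ᵥ (WithLp.equiv 2 (Fin n → ℝ) x) := rfl
      rw [this]
      set v := (WithLp.equiv 2 (Fin n → ℝ)) x
      have : (L *ᵥ v) ⬝ᵥ (L *ᵥ v) = v ⬝ᵥ A *ᵥ v := by
        rw [← hAL, ← Matrix.mulVec_mulVec, Matrix.dotProduct_mulVec, ← Matrix.mulVec_transpose,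
          Matrix.conjTranspose_eq_transpose_of_trivial, dotProduct_comm]
      rw [this]
      exact h v
    calc ‖(Matrix.toEuclideanLin.trans LinearMap.toContinuousLinearMap) L x‖
        = Real.sqrt (‖(Matrix.toEuclideanLin.trans LinearMap.toContinuousLinearMap) L x‖ ^ 2) :=
          (Real.sqrt_sq (norm_nonneg _)).symm
      _ ≤ Real.sqrt (c * ‖x‖ ^ 2) := Real.sqrt_le_sqrt key
      _ = Real.sqrt c * ‖x‖ := by
          rw [Real.sqrt_mul hc, Real.sqrt_sq (norm_nonneg _)]
  calc ‖A‖ = ‖L‖ * ‖L‖ := hnorm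
    _ ≤ Real.sqrt c * Real.sqrt c := by
        apply mul_le_mul hLnorm hLnorm (norm_nonneg _) (Real.sqrt_nonneg _)
    _ = c := Real.mul_self_sqrt hc

lemma dot_mmt {n r : ℕ} (M : Matrix (Fin n) (Fin r) ℝ) (v : Fin n → ℝ) :
    v ⬝ᵥ (M * Mᵀ) *ᵥ v = (Mᵀ *ᵥ v) ⬝ᵥ (Mᵀ *ᵥ v) := by
  rw [← Matrix.mulVec_mulVec, Matrix.dotProduct_mulVec, ← Matrix.mulVec_transpose]

lemma opnorm_dot {n : ℕ} (B : Matrix (Fin n) (Fin n) ℝ) (x : Fin n → ℝ) :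
    x ⬝ᵥ B *ᵥ x ≤ ‖B‖ * (x ⬝ᵥ x) := by
  set x' : EuclideanSpace ℝ (Fin n) := (WithLp.equiv 2 (Fin n → ℝ)).symm x with hx'
  set y' : EuclideanSpace ℝ (Fin n) := (WithLp.equiv 2 (Fin n → ℝ)).symm (B *ᵥ x) with hy'
  have h1 : x ⬝ᵥ B *ᵥ x = inner (𝕜 := ℝ) x' y' := by
    rw [PiLp.inner_apply]
    simp [dotProduct, hx', hy', mul_comm]
  have h2 : inner (𝕜 := ℝ) x' y' ≤ ‖x'‖ * ‖y'‖ := real_inner_le_norm _ _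
  have h3 : ‖y'‖ ≤ ‖B‖ * ‖x'‖ := Matrix.l2_opNorm_mulVec B x'
  have h4 : ‖x'‖ ^ 2 = x ⬝ᵥ x := by
    rw [euclid_norm_sq]; congr 1
  calc x ⬝ᵥ B *ᵥ x ≤ ‖x'‖ * ‖y'‖ := h1 ▸ h2
    _ ≤ ‖x'‖ * (‖B‖ * ‖x'‖) := by
        exact mul_le_mul_of_nonneg_left h3 (norm_nonneg _)
    _ = ‖B‖ * ‖x'‖ ^ 2 := by ring
    _ = ‖B‖ * (x ⬝ᵥ x) := by rw [h4]

lemma middle {n r : ℕ} {B : Matrix (Fin n) (Fin n) ℝ} (hB : B.PosSemidef)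
    (s : Matrix (Fin n) (Fin r) ℝ) (x : Fin n → ℝ) :
    x ⬝ᵥ (B * s * (B * s)ᵀ) *ᵥ x ≤ (sᵀ * B * s).trace * (x ⬝ᵥ B *ᵥ x) := by
  set L := CFC.sqrt B with hLdef
  have hLps := (CFC.sqrt_nonneg B).posSemidef
  have hLt : Lᵀ = L := by
    have := hLps.1
    rwa [Matrix.IsHermitian, Matrix.conjTranspose_eq_transpose_of_trivial] at this
  have hLL : L * L = B := CFC.sqrt_mul_sqrt_self B hB.nonneg
  have hBs : B * s = L * (L * s) := by rw [← Matrix.mul_assoc, hLL]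
  have hfactor : B * s * (B * s)ᵀ = L * ((L * s) * (L * s)ᵀ) * L := by
    rw [hBs, Matrix.transpose_mul, hLt]
    simp only [Matrix.mul_assoc]
  have hdot : x ⬝ᵥ (L * ((L * s) * (L * s)ᵀ) * L) *ᵥ x
      = (L *ᵥ x) ⬝ᵥ ((L * s) * (L * s)ᵀ) *ᵥ (L *ᵥ x) := by
    rw [← Matrix.mulVec_mulVec, ← Matrix.mulVec_mulVec, Matrix.dotProduct_mulVec,
      ← Matrix.mulVec_transpose, hLt]
  have htr : ((L * s)ᵀ * (L * s)).trace = (sᵀ * B * s).trace := by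
    rw [Matrix.transpose_mul, hLt, Matrix.mul_assoc, ← Matrix.mul_assoc L, hLL,
      ← Matrix.mul_assoc]
  have hvv : (L *ᵥ x) ⬝ᵥ (L *ᵥ x) = x ⬝ᵥ B *ᵥ x := by
    have := dot_mmt Lᵀ x
    rw [Matrix.transpose_transpose, hLt] at this
    rw [← this, hLL]
  calc x ⬝ᵥ (B * s * (B * s)ᵀ) *ᵥ x
      = (L *ᵥ x) ⬝ᵥ ((L * s) * (L * s)ᵀ) *ᵥ (L *ᵥ x) := by rw [hfactor, hdot]
    _ ≤ ((L * s)ᵀ * (L * s)).trace * ((L *ᵥ x) ⬝ᵥ (L *ᵥ x)) := cs_sum (L * s) (L *ᵥ x)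
    _ = (sᵀ * B * s).trace * (x ⬝ᵥ B *ᵥ x) := by rw [htr, hvv]

theorem stmt7 {n r : ℕ} (δ C : ℝ) (hδ : 0 < δ) (hC : 0 < C)
    -- `B` is symmetric positive semidefinite
    (B : Matrix (Fin n) (Fin n) ℝ) (hB : B.PosSemidef)
    (s ybar : Matrix (Fin n) (Fin r) ℝ)
    (h1 : 0 < (sᵀ * B * s).trace)
    (h2 : 0.25 * δ * fnorm s ^ 2 ≤ (sᵀ * ybar).trace)
    (h3 : 0 < 0.25 * δ * fnorm s ^ 2)
    (h4 : fnorm ybar ≤ C * fnorm s) :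
    ‖B - ((sᵀ * B * s).trace)⁻¹ • (B * s * (B * s)ᵀ)
        + ((sᵀ * ybar).trace)⁻¹ • (ybar * ybarᵀ)‖ ≤ ‖B‖ + 4 * C ^ 2 / δ := by
  set t := (sᵀ * B * s).trace with ht
  set u := (sᵀ * ybar).trace with hu
  have hu0 : 0 < u := lt_of_lt_of_le h3 h2
  have hfs2 : 0 < fnorm s ^ 2 := by nlinarith
  have hfy2 : fnorm ybar ^ 2 ≤ C ^ 2 * fnorm s ^ 2 := by
    have h0 : 0 ≤ fnorm ybar := Real.sqrt_nonneg _
    nlinarith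
  set P := B * s * (B * s)ᵀ with hP
  set Q := ybar * ybarᵀ with hQ
  have hPh : P.IsHermitian := by
    have := Matrix.isHermitian_mul_conjTranspose_self (B * s)
    rwa [Matrix.conjTranspose_eq_transpose_of_trivial] at this
  have hQh : Q.IsHermitian := by
    have := Matrix.isHermitian_mul_conjTranspose_self ybar
    rwa [Matrix.conjTranspose_eq_transpose_of_trivial] at this
  have hPx : ∀ x : Fin n → ℝ, 0 ≤ x ⬝ᵥ P *ᵥ x := fun x => by
    rw [hP, dot_mmt]
    exact Finset.sum_nonneg fun i _ => mul_self_nonneg _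
  have hQx : ∀ x : Fin n → ℝ, 0 ≤ x ⬝ᵥ Q *ᵥ x := fun x => by
    rw [hQ, dot_mmt]
    exact Finset.sum_nonneg fun i _ => mul_self_nonneg _
  have hmid : ∀ x : Fin n → ℝ, x ⬝ᵥ P *ᵥ x ≤ t * (x ⬝ᵥ B *ᵥ x) := fun x => middle hB s x
  have hBx : ∀ x : Fin n → ℝ, 0 ≤ x ⬝ᵥ B *ᵥ x := fun x => by
    have := hB.dotProduct_mulVec_nonneg x
    simpa using this
  -- X := B - t⁻¹ • P
  have hXps : (B - t⁻¹ • P).PosSemidef := by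
    refine .of_dotProduct_mulVec_nonneg (hB.1.sub ?_) fun x => ?_
    · show (t⁻¹ • P)ᴴ = t⁻¹ • P
      rw [Matrix.conjTranspose_smul, hPh.eq, star_trivial]
    · have expand : star x ⬝ᵥ (B - t⁻¹ • P) *ᵥ x
          = x ⬝ᵥ B *ᵥ x - t⁻¹ * (x ⬝ᵥ P *ᵥ x) := by
        rw [star_trivial, Matrix.sub_mulVec, dotProduct_sub,
          Matrix.smul_mulVec, dotProduct_smul, smul_eq_mul]
      rw [expand, sub_nonneg]
      calc t⁻¹ * (x ⬝ᵥ P *ᵥ x) ≤ t⁻¹ * (t * (x ⬝ᵥ B *ᵥ x)) := by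
            exact mul_le_mul_of_nonneg_left (hmid x) (by positivity)
        _ = x ⬝ᵥ B *ᵥ x := by field_simp
  have hYps : (u⁻¹ • Q).PosSemidef := by
    refine .of_dotProduct_mulVec_nonneg ?_ fun x => ?_
    · show (u⁻¹ • Q)ᴴ = u⁻¹ • Q
      rw [Matrix.conjTranspose_smul, hQh.eq, star_trivial]
    · rw [star_trivial, Matrix.smul_mulVec, dotProduct_smul, smul_eq_mul]
      exact mul_nonneg (by positivity) (hQx x)
  have hXnorm : ‖B - t⁻¹ • P‖ ≤ ‖B‖ := by
    apply psd_opnorm_le hXps (norm_nonneg B)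
    intro x
    have expand : x ⬝ᵥ (B - t⁻¹ • P) *ᵥ x = x ⬝ᵥ B *ᵥ x - t⁻¹ * (x ⬝ᵥ P *ᵥ x) := by
      rw [Matrix.sub_mulVec, dotProduct_sub,
        Matrix.smul_mulVec, dotProduct_smul, smul_eq_mul]
    rw [expand]
    have h5 : 0 ≤ t⁻¹ * (x ⬝ᵥ P *ᵥ x) := mul_nonneg (by positivity) (hPx x)
    have := opnorm_dot B x
    linarith
  have hYnorm : ‖u⁻¹ • Q‖ ≤ 4 * C ^ 2 / δ := by
    apply psd_opnorm_le hYps (by positivity)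
    intro x
    rw [Matrix.smul_mulVec, dotProduct_smul, smul_eq_mul]
    have hcs : x ⬝ᵥ Q *ᵥ x ≤ fnorm ybar ^ 2 * (x ⬝ᵥ x) := by
      have := cs_sum ybar x
      rwa [show fnorm ybar ^ 2 = (ybarᵀ * ybar).trace from
        Real.sq_sqrt (trace_tmul_nonneg ybar)]
    have hxx : 0 ≤ x ⬝ᵥ x := Finset.sum_nonneg fun i _ => mul_self_nonneg _
    have hkey : u⁻¹ * fnorm ybar ^ 2 ≤ 4 * C ^ 2 / δ := by
      have h6 : u⁻¹ ≤ (0.25 * δ * fnorm s ^ 2)⁻¹ := by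
        apply inv_anti₀ h3 h2
      have h7 : 0 ≤ u⁻¹ := by positivity
      calc u⁻¹ * fnorm ybar ^ 2 ≤ (0.25 * δ * fnorm s ^ 2)⁻¹ * (C ^ 2 * fnorm s ^ 2) := by
            apply mul_le_mul h6 hfy2 (by positivity) (by positivity)
        _ = 4 * C ^ 2 / δ := by
            field_simp
            ring
            exact mul_inv_cancel₀ (fun h => by simp [h] at hfs2)
    calc u⁻¹ * (x ⬝ᵥ Q *ᵥ x) ≤ u⁻¹ * (fnorm ybar ^ 2 * (x ⬝ᵥ x)) := by
          exact mul_le_mul_of_nonneg_left hcs (by positivity)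
      _ = (u⁻¹ * fnorm ybar ^ 2) * (x ⬝ᵥ x) := by ring
      _ ≤ (4 * C ^ 2 / δ) * (x ⬝ᵥ x) := mul_le_mul_of_nonneg_right hkey hxx
  calc ‖B - t⁻¹ • P + u⁻¹ • Q‖ ≤ ‖B - t⁻¹ • P‖ + ‖u⁻¹ • Q‖ := norm_add_le _ _
    _ ≤ ‖B‖ + 4 * C ^ 2 / δ := add_le_add hXnorm hYnorm
end

section
/- Let δ, C > 0, let H ∈ ℝ^{n×n} be symmetric, and let s, ȳ ∈ ℝ^{n×r} satisfy tr(sᵀȳ) ≥ 0.25 δ‖s‖² > 0 and ‖ȳ‖ ≤ C‖s‖; set ρ̄ := 1/tr(sᵀȳ). Then the inverse BFGS-updated matrix H⁺ := (I − ρ̄ s ȳᵀ) H (I − ρ̄ ȳ sᵀ) + ρ̄ s sᵀ satisfies ‖H⁺‖₂ ≤ (1 + 4C/δ)² ‖H‖₂ + 4/δ, where ‖·‖₂ denotes the spectral (operator 2-) norm. -/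
open Matrix
open scoped Matrix.Norms.L2Operator
lemma fnorm_trace {n r : ℕ} (A : Matrix (Fin n) (Fin r) ℝ) :
    (Aᵀ * A).trace = ∑ j, ∑ i, A i j ^ 2 := by
  simp [Matrix.trace, Matrix.mul_apply, Matrix.diag, sq]

lemma fnorm_nonneg {n r : ℕ} (A : Matrix (Fin n) (Fin r) ℝ) : 0 ≤ fnorm A :=
  Real.sqrt_nonneg _

lemma fnorm_sq {n r : ℕ} (A : Matrix (Fin n) (Fin r) ℝ) :
    fnorm A ^ 2 = (Aᵀ * A).trace := by
  rw [fnorm, Real.sq_sqrt]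
  rw [fnorm_trace]
  positivity

/-- Spectral norm is at most the Frobenius norm. -/
lemma l2_le_fnorm {n r : ℕ} (A : Matrix (Fin n) (Fin r) ℝ) : ‖A‖ ≤ fnorm A := by
  rw [Matrix.l2_opNorm_def]
  apply ContinuousLinearMap.opNorm_le_bound _ (fnorm_nonneg A)
  intro x
  simp only [LinearEquiv.trans_apply, LinearMap.coe_toContinuousLinearMap',
    Matrix.toEuclideanLin_apply]
  rw [EuclideanSpace.norm_eq, EuclideanSpace.norm_eq, fnorm,
    ← Real.sqrt_mul (by rw [fnorm_trace]; positivity)]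
  apply Real.sqrt_le_sqrt
  rw [fnorm_trace]
  have key : ∀ i, (A.mulVec ((WithLp.equiv 2 (Fin r → ℝ)) x) i) ^ 2 ≤
      (∑ j, A i j ^ 2) * ∑ j, (x j) ^ 2 := by
    intro i
    have := Finset.sum_mul_sq_le_sq_mul_sq Finset.univ (fun j => A i j)
      (fun j => (WithLp.equiv 2 (Fin r → ℝ)) x j)
    simpa [Matrix.mulVec, dotProduct] using this
  calc ∑ i, ‖(WithLp.equiv 2 (Fin n → ℝ)).symm (A.mulVec ((WithLp.equiv 2 (Fin r → ℝ)) x)) i‖ ^ 2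
      = ∑ i, (A.mulVec ((WithLp.equiv 2 (Fin r → ℝ)) x) i) ^ 2 := by
        simp [sq_abs]
    _ ≤ ∑ i, (∑ j, A i j ^ 2) * ∑ j, (x j) ^ 2 := Finset.sum_le_sum fun i _ => key i
    _ = (∑ j, ∑ i, A i j ^ 2) * ∑ j, ‖x j‖ ^ 2 := by
        rw [← Finset.sum_mul, Finset.sum_comm]
        simp [sq_abs]

lemma fnorm_transpose {n r : ℕ} (A : Matrix (Fin n) (Fin r) ℝ) : fnorm Aᵀ = fnorm A := by
  rw [fnorm, fnorm, Matrix.transpose_transpose, Matrix.trace_mul_comm]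

lemma norm_one_le' {n : ℕ} : ‖(1 : Matrix (Fin n) (Fin n) ℝ)‖ ≤ 1 := by
  rw [Matrix.cstar_norm_def, _root_.map_one]
  exact ContinuousLinearMap.norm_id_le

theorem stmt8 {n r : ℕ} (δ C : ℝ) (hδ : 0 < δ) (hC : 0 < C)
    -- `H` is symmetric
    (H : Matrix (Fin n) (Fin n) ℝ) (hH : H.IsSymm)
    (s ybar : Matrix (Fin n) (Fin r) ℝ)
    (h1 : 0.25 * δ * fnorm s ^ 2 ≤ (sᵀ * ybar).trace)
    (h2 : 0 < 0.25 * δ * fnorm s ^ 2)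
    (h3 : fnorm ybar ≤ C * fnorm s)
    (ρ : ℝ) (hρ : ρ = ((sᵀ * ybar).trace)⁻¹) :
    ‖(1 - ρ • (s * ybarᵀ)) * H * (1 - ρ • (ybar * sᵀ)) + ρ • (s * sᵀ)‖ ≤
      (1 + 4 * C / δ) ^ 2 * ‖H‖ + 4 / δ := by
  set t := (sᵀ * ybar).trace with ht
  have ht0 : 0 < t := lt_of_lt_of_le h2 h1
  have hρ0 : 0 < ρ := hρ ▸ inv_pos.mpr ht0
  have hs2 : 0 < fnorm s ^ 2 := by nlinarith
  have hs0 : 0 < fnorm s := by nlinarith [fnorm_nonneg s]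
  -- key scalar bounds
  have hy0 : 0 ≤ fnorm ybar := fnorm_nonneg ybar
  have key1 : ρ * (fnorm s * fnorm ybar) ≤ 4 * C / δ := by
    rw [hρ]
    rw [inv_mul_le_iff₀ ht0]
    have : fnorm s * fnorm ybar ≤ C * fnorm s ^ 2 := by nlinarith
    have h4 : 4 * C / δ * (0.25 * δ * fnorm s ^ 2) = C * fnorm s ^ 2 := by
      field_simp; ring
    calc fnorm s * fnorm ybar ≤ C * fnorm s ^ 2 := this
      _ = 4 * C / δ * (0.25 * δ * fnorm s ^ 2) := h4.symm
      _ ≤ 4 * C / δ * t := by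
          apply mul_le_mul_of_nonneg_left h1
          positivity
      _ = t * (4 * C / δ) := by ring
  have key2 : ρ * (fnorm s * fnorm s) ≤ 4 / δ := by
    rw [hρ, inv_mul_le_iff₀ ht0]
    have h4 : 4 / δ * (0.25 * δ * fnorm s ^ 2) = fnorm s ^ 2 := by
      field_simp; ring
    calc fnorm s * fnorm s = fnorm s ^ 2 := (sq (fnorm s)).symm
      _ = 4 / δ * (0.25 * δ * fnorm s ^ 2) := h4.symm
      _ ≤ 4 / δ * t := by
          apply mul_le_mul_of_nonneg_left h1
          positivity
      _ = t * (4 / δ) := by ring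
  -- spectral norm bounds
  have hsy : ‖s * ybarᵀ‖ ≤ fnorm s * fnorm ybar := by
    calc ‖s * ybarᵀ‖ ≤ ‖s‖ * ‖ybarᵀ‖ := Matrix.l2_opNorm_mul s ybarᵀ
      _ ≤ fnorm s * fnorm ybar := by
          have h1' := l2_le_fnorm s
          have h2' := l2_le_fnorm ybarᵀ
          rw [fnorm_transpose] at h2'
          exact mul_le_mul h1' h2' (norm_nonneg _) (fnorm_nonneg s)
  have hys : ‖ybar * sᵀ‖ ≤ fnorm ybar * fnorm s := by
    calc ‖ybar * sᵀ‖ ≤ ‖ybar‖ * ‖sᵀ‖ := Matrix.l2_opNorm_mul ybar sᵀ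
      _ ≤ fnorm ybar * fnorm s := by
          have h1' := l2_le_fnorm ybar
          have h2' := l2_le_fnorm sᵀ
          rw [fnorm_transpose] at h2'
          exact mul_le_mul h1' h2' (norm_nonneg _) (fnorm_nonneg ybar)
  have hss : ‖s * sᵀ‖ ≤ fnorm s * fnorm s := by
    calc ‖s * sᵀ‖ ≤ ‖s‖ * ‖sᵀ‖ := Matrix.l2_opNorm_mul s sᵀ
      _ ≤ fnorm s * fnorm s := by
          have h1' := l2_le_fnorm s
          have h2' := l2_le_fnorm sᵀ
          rw [fnorm_transpose] at h2'
          exact mul_le_mul h1' h2' (norm_nonneg _) (fnorm_nonneg s)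
  have hfac1 : ‖(1 : Matrix (Fin n) (Fin n) ℝ) - ρ • (s * ybarᵀ)‖ ≤ 1 + 4 * C / δ := by
    calc ‖(1 : Matrix (Fin n) (Fin n) ℝ) - ρ • (s * ybarᵀ)‖
        ≤ ‖(1 : Matrix (Fin n) (Fin n) ℝ)‖ + ‖ρ • (s * ybarᵀ)‖ := norm_sub_le _ _
      _ ≤ 1 + ρ * ‖s * ybarᵀ‖ := by
          rw [norm_smul, Real.norm_eq_abs, abs_of_pos hρ0]
          exact add_le_add norm_one_le' le_rfl
      _ ≤ 1 + 4 * C / δ := by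
          have : ρ * ‖s * ybarᵀ‖ ≤ ρ * (fnorm s * fnorm ybar) :=
            mul_le_mul_of_nonneg_left hsy hρ0.le
          linarith [key1]
  have hfac2 : ‖(1 : Matrix (Fin n) (Fin n) ℝ) - ρ • (ybar * sᵀ)‖ ≤ 1 + 4 * C / δ := by
    calc ‖(1 : Matrix (Fin n) (Fin n) ℝ) - ρ • (ybar * sᵀ)‖
        ≤ ‖(1 : Matrix (Fin n) (Fin n) ℝ)‖ + ‖ρ • (ybar * sᵀ)‖ := norm_sub_le _ _
      _ ≤ 1 + ρ * ‖ybar * sᵀ‖ := by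
          rw [norm_smul, Real.norm_eq_abs, abs_of_pos hρ0]
          exact add_le_add norm_one_le' le_rfl
      _ ≤ 1 + 4 * C / δ := by
          have : ρ * ‖ybar * sᵀ‖ ≤ ρ * (fnorm ybar * fnorm s) :=
            mul_le_mul_of_nonneg_left hys hρ0.le
          nlinarith [key1]
  have hlast : ‖ρ • (s * sᵀ)‖ ≤ 4 / δ := by
    rw [norm_smul, Real.norm_eq_abs, abs_of_pos hρ0]
    calc ρ * ‖s * sᵀ‖ ≤ ρ * (fnorm s * fnorm s) := mul_le_mul_of_nonneg_left hss hρ0.le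
      _ ≤ 4 / δ := key2
  have hpos : (0:ℝ) ≤ 1 + 4 * C / δ := by positivity
  calc ‖(1 - ρ • (s * ybarᵀ)) * H * (1 - ρ • (ybar * sᵀ)) + ρ • (s * sᵀ)‖
      ≤ ‖(1 - ρ • (s * ybarᵀ)) * H * (1 - ρ • (ybar * sᵀ))‖ + ‖ρ • (s * sᵀ)‖ := norm_add_le _ _
    _ ≤ ‖(1 - ρ • (s * ybarᵀ)) * H‖ * ‖1 - ρ • (ybar * sᵀ)‖ + ‖ρ • (s * sᵀ)‖ := by
        gcongr; exact norm_mul_le _ _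
    _ ≤ ‖1 - ρ • (s * ybarᵀ)‖ * ‖H‖ * ‖1 - ρ • (ybar * sᵀ)‖ + ‖ρ • (s * sᵀ)‖ := by
        gcongr; exact norm_mul_le _ _
    _ ≤ (1 + 4 * C / δ) * ‖H‖ * (1 + 4 * C / δ) + 4 / δ := by
        gcongr
    _ = (1 + 4 * C / δ) ^ 2 * ‖H‖ + 4 / δ := by ring
end
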